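/- No 8-cycle (Hamiltonian cycle) of K_{2,2,1,1,1,1} lies in all 16 canonical H₈-subgraphs: in any Hamiltonian cycle some vertex of {a,b,x,y} is adjacent along the cycle to some vertex of {1,2,3,4}, and then the cycle is not contained in the H₈-subgraph whose top vertex is a vertex of the size-2 part not containing that vertex and whose middle vertices include both that vertex and its singleton neighbor. -/

import Mathlib

open SimpleGraph

/-- The graph `H₈`, obtained from `K₇` by a triangle-Y move: vertex `0` is the
top vertex, `1,2,3` the middle vertices, `4,5,6,7` the bottom vertices. -/
def H8 : SimpleGraph (Fin 8) where
  Adj u v := u ≠ v ∧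
    ((![0, 1, 1, 1, 2, 2, 2, 2] u = (0 : Fin 3) ∧ ![0, 1, 1, 1, 2, 2, 2, 2] v = (1 : Fin 3)) ∨
     (![0, 1, 1, 1, 2, 2, 2, 2] u = (1 : Fin 3) ∧ ![0, 1, 1, 1, 2, 2, 2, 2] v = (0 : Fin 3)) ∨
     (![0, 1, 1, 1, 2, 2, 2, 2] u = (1 : Fin 3) ∧ ![0, 1, 1, 1, 2, 2, 2, 2] v = (2 : Fin 3)) ∨
     (![0, 1, 1, 1, 2, 2, 2, 2] u = (2 : Fin 3) ∧ ![0, 1, 1, 1, 2, 2, 2, 2] v = (1 : Fin 3)) ∨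
     (![0, 1, 1, 1, 2, 2, 2, 2] u = (2 : Fin 3) ∧ ![0, 1, 1, 1, 2, 2, 2, 2] v = (2 : Fin 3)))
  symm := by constructor; intro u v h; exact ⟨h.1.symm, by tauto⟩
  loopless := by constructor; intro v h; exact h.1 rfl

/-- The vertex type of `K_{2,2,1,1,1,1}` with parts `{a,b}, {x,y}, {1},…,{4}`. -/
abbrev V221111 := Σ i, ![Fin 2, Fin 2, Fin 1, Fin 1, Fin 1, Fin 1] i

/-- The `a`-th vertex of the `i`-th size-2 part. -/
def vtx (i a : Fin 2) : V221111 := if i = 0 then ⟨0, a⟩ else ⟨1, a⟩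

/-- The vertex of the `j`-th singleton part. -/
def sing : Fin 4 → V221111 :=
  ![⟨2, (0 : Fin 1)⟩, ⟨3, (0 : Fin 1)⟩, ⟨4, (0 : Fin 1)⟩, ⟨5, (0 : Fin 1)⟩]

instance auxFib : ∀ i, Fintype (![Fin 2, Fin 2, Fin 1, Fin 1, Fin 1, Fin 1] i)
  | 0 => inferInstanceAs (Fintype (Fin 2))
  | 1 => inferInstanceAs (Fintype (Fin 2))
  | 2 => inferInstanceAs (Fintype (Fin 1))
  | 3 => inferInstanceAs (Fintype (Fin 1))
  | 4 => inferInstanceAs (Fintype (Fin 1))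
  | 5 => inferInstanceAs (Fintype (Fin 1))

instance auxDib : ∀ i, DecidableEq (![Fin 2, Fin 2, Fin 1, Fin 1, Fin 1, Fin 1] i)
  | 0 => inferInstanceAs (DecidableEq (Fin 2))
  | 1 => inferInstanceAs (DecidableEq (Fin 2))
  | 2 => inferInstanceAs (DecidableEq (Fin 1))
  | 3 => inferInstanceAs (DecidableEq (Fin 1))
  | 4 => inferInstanceAs (DecidableEq (Fin 1))
  | 5 => inferInstanceAs (DecidableEq (Fin 1))

lemma aux_card : Fintype.card V221111 = 8 := by rfl

lemma aux_eqP (v : V221111) (h : v.1 = 0 ∨ v.1 = 1) : ∃ i a, v = vtx i a := by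
  obtain ⟨i, x⟩ := v
  fin_cases i
  · exact ⟨0, x, by simp [vtx]⟩
  · exact ⟨1, x, by simp [vtx]⟩
  all_goals simp at h

lemma aux_eqNP (v : V221111) (h : ¬(v.1 = 0 ∨ v.1 = 1)) : ∃ j, v = sing j := by
  obtain ⟨i, x⟩ := v
  fin_cases i
  · simp at h
  · simp at h
  · exact ⟨0, by simp [sing]; exact congrArg (Sigma.mk _) (Subsingleton.elim (α := Fin 1) _ _)⟩
  · exact ⟨1, by simp [sing]; exact congrArg (Sigma.mk _) (Subsingleton.elim (α := Fin 1) _ _)⟩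
  · exact ⟨2, by simp [sing]; exact congrArg (Sigma.mk _) (Subsingleton.elim (α := Fin 1) _ _)⟩
  · exact ⟨3, by simp [sing]; exact congrArg (Sigma.mk _) (Subsingleton.elim (α := Fin 1) _ _)⟩

lemma aux_cross {V : Type*} {G : SimpleGraph V} (P : V → Prop) :
    ∀ {u x : V} (p : G.Walk u x), P u → ∀ y ∈ p.support, ¬ P y →
    ∃ a b, s(a,b) ∈ p.edges ∧ P a ∧ ¬ P b := by
  intro u x p
  induction p with
  | nil => intro hu y hy hny; simp at hy; subst hy; exact absurd hu hny
  | cons h p ih =>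
    rename_i u' v' w'
    intro hu y hy hny
    by_cases hv : P v'
    · simp only [Walk.support_cons, List.mem_cons] at hy
      rcases hy with rfl | hy
      · exact absurd hu hny
      · obtain ⟨a, b, hab, ha, hb⟩ := ih hv y hy hny
        exact ⟨a, b, by simp [hab], ha, hb⟩
    · exact ⟨u', v', by simp, hu, hv⟩

lemma aux_noadj : ∀ u v : Fin 8, (u = 1 ∨ u = 2 ∨ u = 3) → (v = 1 ∨ v = 2 ∨ v = 3) →
    ¬ H8.Adj u v := by
  intro u v hu hv h
  obtain ⟨-, h⟩ := h
  rcases hu with rfl | rfl | rfl <;> rcases hv with rfl | rfl | rfl <;> revert h <;> decide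

/-- No Hamiltonian (8-)cycle of `K_{2,2,1,1,1,1}` lies in all 16 canonical
`H₈`-subgraphs: in any Hamiltonian cycle some vertex `vtx i a` of a size-2 part
is adjacent along the cycle to some singleton vertex `sing j`, and then the
cycle is not contained in any canonical `H₈`-subgraph whose top vertex lies in
the other size-2 part and whose middle vertices are both vertices of the part
of `vtx i a` together with `sing j` (those middle vertices are non-adjacent in
`H₈`). -/
theorem stmt_16 :
    let G := completeMultipartiteGraph ![Fin 2, Fin 2, Fin 1, Fin 1, Fin 1, Fin 1]
    ∀ (v : V221111) (c : G.Walk v v), c.IsCycle → c.length = 8 →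
      ∃ (i a : Fin 2) (j : Fin 4),
        s(vtx i a, sing j) ∈ c.edges ∧
        ∀ (b : Fin 2) (f : H8 →g G), Function.Injective f →
          f 0 = vtx (1 - i) b →
          ({f 1, f 2, f 3} : Set V221111) = {vtx i 0, vtx i 1, sing j} →
          ¬ (∀ e ∈ c.edges, ∃ e' ∈ H8.edgeSet, e = Sym2.map f e') := by
  intro G v c hc hlen
  have hsupp : ∀ x : V221111, x ∈ c.support := by
    intro x
    have hnd : c.support.tail.Nodup := hc.support_nodup
    have hls := c.length_support
    have hl : c.support.tail.length = 8 := by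
      rw [List.length_tail, hls, hlen]
    have huniv : c.support.tail.toFinset = Finset.univ :=
      Finset.eq_univ_of_card _ (by rw [List.toFinset_card_of_nodup hnd, hl, aux_card])
    have : x ∈ c.support.tail.toFinset := by rw [huniv]; exact Finset.mem_univ x
    exact List.mem_of_mem_tail (List.mem_toFinset.mp this)
  set P : V221111 → Prop := fun w => w.1 = 0 ∨ w.1 = 1 with hP
  have h1 : P (vtx 0 0) := by left; rfl
  have h2 : ¬ P (sing 0) := by show ¬ ((sing 0).1 = 0 ∨ (sing 0).1 = 1); decide
  have key : ∃ p s, s(p, s) ∈ c.edges ∧ P p ∧ ¬ P s := by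
    by_cases hPv : P v
    · exact aux_cross P c hPv (sing 0) (hsupp _) h2
    · obtain ⟨a', b', hab, ha, hb⟩ :=
        aux_cross (fun w => ¬ P w) c hPv (vtx 0 0) (hsupp _) (not_not_intro h1)
      exact ⟨b', a', by rwa [Sym2.eq_swap], not_not.mp hb, ha⟩
  obtain ⟨p, s, hmem, hp, hs⟩ := key
  obtain ⟨i, a, rfl⟩ := aux_eqP p hp
  obtain ⟨j, rfl⟩ := aux_eqNP s hs
  refine ⟨i, a, j, hmem, ?_⟩
  intro b f hinj hf0 hset hall
  obtain ⟨e', he', heq⟩ := hall _ hmem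
  induction e' using Sym2.ind with
  | _ u' v' =>
    rw [Sym2.map_pair_eq, Sym2.eq_iff] at heq
    have claim : ∀ w : Fin 8, (f w = vtx i a ∨ f w = sing j) → (w = 1 ∨ w = 2 ∨ w = 3) := by
      intro w hw
      have hmem' : f w ∈ ({vtx i 0, vtx i 1, sing j} : Set V221111) := by
        rcases hw with h | h <;> rw [h]
        · fin_cases a
          · exact Set.mem_insert _ _
          · exact Set.mem_insert_of_mem _ (Set.mem_insert _ _)
        · exact Set.mem_insert_of_mem _ (Set.mem_insert_of_mem _ rfl)
      rw [← hset] at hmem'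
      rcases hmem' with h | h | h
      · exact Or.inl (hinj h)
      · exact Or.inr (Or.inl (hinj h))
      · exact Or.inr (Or.inr (hinj h))
    have hu : u' = 1 ∨ u' = 2 ∨ u' = 3 := by
      rcases heq with ⟨h₁, h₂⟩ | ⟨h₁, h₂⟩
      · exact claim u' (Or.inl h₁.symm)
      · exact claim u' (Or.inr h₂.symm)
    have hv : v' = 1 ∨ v' = 2 ∨ v' = 3 := by
      rcases heq with ⟨h₁, h₂⟩ | ⟨h₁, h₂⟩
      · exact claim v' (Or.inr h₂.symm)
      · exact claim v' (Or.inl h₁.symm)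
    exact aux_noadj u' v' hu hv (H8.mem_edgeSet.mp he')
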